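/- (Tangent-chord angle) Let A, B, C be distinct points on a circle with center O. Let D be a point on the tangent line to the circle at C lying in the open half-plane determined by line BC that does not contain A. Then ∠BAC = ∠BCD. -/
import Mathlib


open EuclideanGeometry
open scoped RealInnerProductSpace
open Real

set_option maxHeartbeats 1000000

theorem tangent_chord_angle (A B C O D : EuclideanSpace ℝ (Fin 2)) (r : ℝ) (hr : 0 < r)
    (hA : dist A O = r) (hB : dist B O = r) (hC : dist C O = r)
    (hAB : A ≠ B) (hAC : A ≠ C) (hBC : B ≠ C)
    (hD : ⟪D - C, C - O⟫ = 0) (hDC : D ≠ C)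
    (hside : (affineSpan ℝ ({B, C} : Set (EuclideanSpace ℝ (Fin 2)))).SOppSide D A) :
    ∠ B A C = ∠ B C D := by
  have hOC : O ≠ C := by
    rintro rfl
    rw [dist_self] at hC
    exact hr.ne hC
  haveI : Fact (Module.finrank ℝ (EuclideanSpace ℝ (Fin 2)) = 2) :=
    ⟨finrank_euclideanSpace_fin⟩
  haveI : Module.Oriented ℝ (EuclideanSpace ℝ (Fin 2)) (Fin 2) :=
    ⟨(EuclideanSpace.basisFun (Fin 2) ℝ).toBasis.orientation⟩
  have hAs : A ∈ (⟨O, r⟩ : EuclideanGeometry.Sphere (EuclideanSpace ℝ (Fin 2))) := hA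
  have hBs : B ∈ (⟨O, r⟩ : EuclideanGeometry.Sphere (EuclideanSpace ℝ (Fin 2))) := hB
  have hCs : C ∈ (⟨O, r⟩ : EuclideanGeometry.Sphere (EuclideanSpace ℝ (Fin 2))) := hC
  -- inscribed angle
  have h1' := Sphere.oangle_center_eq_two_zsmul_oangle hBs hAs hCs hAB hAC
  have h1 : ∡ B O C = (2 : ℤ) • ∡ B A C := h1'
  -- isosceles triangle B O C
  have h2' := Sphere.oangle_eq_pi_sub_two_zsmul_oangle_center_left hBs hCs hBC
  have h2 : ∡ B O C = (π : ℝ) - (2 : ℤ) • ∡ O C B := h2'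
  -- split angle at C
  have h3 : ∡ B C O + ∡ O C D = ∡ B C D := oangle_add hBC hOC hDC
  -- tangency: ∡ O C D = ± π/2
  have hperp : ∡ O C D = ((π / 2 : ℝ) : Real.Angle) ∨
      ∡ O C D = ((-π / 2 : ℝ) : Real.Angle) := by
    have hinner : ⟪O - C, D - C⟫ = 0 := by
      have : ⟪C - O, D - C⟫ = 0 := by rw [real_inner_comm]; exact hD
      have h' : ⟪-(C - O), D - C⟫ = 0 := by rw [inner_neg_left, this, neg_zero]
      rwa [neg_sub] at h'
    have := (Module.Oriented.positiveOrientation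
        (R := ℝ) (M := EuclideanSpace ℝ (Fin 2))).eq_zero_or_oangle_eq_iff_inner_eq_zero.2 hinner
    rcases this with h | h | h | h
    · exact absurd (sub_eq_zero.1 h) hOC
    · exact absurd (sub_eq_zero.1 h) hDC
    · exact Or.inl h
    · exact Or.inr h
  have h5 : (2 : ℤ) • ∡ O C D = ((π : ℝ) : Real.Angle) := by
    rcases hperp with h | h
    · rw [h, Real.Angle.two_zsmul_coe_div_two]
    · rw [h]
      have : ((-π / 2 : ℝ) : Real.Angle) = ((-π : ℝ) / 2 : ℝ) := by norm_num
      rw [this, Real.Angle.two_zsmul_coe_div_two, Real.Angle.coe_neg, Real.Angle.neg_coe_pi]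
  -- combine: 2 • ∡ B A C = 2 • ∡ B C D
  have h2eq : (2 : ℤ) • ∡ B A C = (2 : ℤ) • ∡ B C D := by
    have hrev : ∡ B C O = -∡ O C B := oangle_rev O C B
    calc (2 : ℤ) • ∡ B A C = ∡ B O C := h1.symm
      _ = (π : ℝ) - (2 : ℤ) • ∡ O C B := h2
      _ = (2 : ℤ) • (-∡ O C B) + (π : ℝ) := by abel
      _ = (2 : ℤ) • ∡ B C O + (2 : ℤ) • ∡ O C D := by rw [hrev, h5]
      _ = (2 : ℤ) • (∡ B C O + ∡ O C D) := by rw [smul_add]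
      _ = (2 : ℤ) • ∡ B C D := by rw [h3]
  -- signs agree
  have hBmem : B ∈ affineSpan ℝ ({B, C} : Set (EuclideanSpace ℝ (Fin 2))) :=
    mem_affineSpan ℝ (Set.mem_insert _ _)
  have hCmem : C ∈ affineSpan ℝ ({B, C} : Set (EuclideanSpace ℝ (Fin 2))) :=
    mem_affineSpan ℝ (Set.mem_insert_of_mem _ rfl)
  have hsign : (∡ B A C).sign = (∡ B C D).sign := by
    have h6 : (∡ C A B).sign = -(∡ C D B).sign :=
      hside.oangle_sign_eq_neg hCmem hBmem
    have h7 : (∡ C D B).sign = (∡ B C D).sign := oangle_rotate_sign B C D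
    have h8 : -(∡ C A B).sign = (∡ B A C).sign := oangle_swap₁₃_sign C A B
    rw [← h8, h6, neg_neg, h7]
  -- ∡ B A C has nonzero sign (A, B, C not collinear)
  have hne : (∡ B A C).sign ≠ 0 := by
    have hcos : EuclideanGeometry.Cospherical ({B, A, C} : Set (EuclideanSpace ℝ (Fin 2))) := by
      refine ⟨O, r, ?_⟩
      rintro p (rfl | rfl | rfl) <;> assumption
    have hai : AffineIndependent ℝ ![B, A, C] :=
      hcos.affineIndependent_of_ne hAB.symm hBC hAC
    have := oangle_ne_zero_and_ne_pi_iff_affineIndependent.2 hai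
    simp only [ne_eq, Real.Angle.sign_eq_zero_iff, not_or]
    exact this
  rcases Real.Angle.two_zsmul_eq_iff.1 h2eq with h | h
  · rw [EuclideanGeometry.angle_eq_abs_oangle_toReal hAB.symm hAC.symm,
      EuclideanGeometry.angle_eq_abs_oangle_toReal hBC hDC, h]
  · exfalso
    have h0 : (∡ B C D).sign = 0 := by
      have h' := hsign
      rw [h, Real.Angle.sign_add_pi] at h'
      cases hc : (∡ B C D).sign <;> rw [hc] at h' <;> simp_all
    apply hne
    rw [h, Real.Angle.sign_add_pi, h0, neg_zero]
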